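/- For every integer n ≥ 1: the matrix L_n is skew-symmetric, the principal part of B̃_n is skew-symmetric, and the product L_n B̃_n satisfies (L_n B̃_n)_{(k₁,ℓ₁),(k₂,ℓ₂)} = 2 if (k₁,ℓ₁) = (k₂,ℓ₂) and (L_n B̃_n)_{(k₁,ℓ₁),(k₂,ℓ₂)} = 0 otherwise, for all (k₁,ℓ₁) ∈ I and (k₂,ℓ₂) ∈ I_ex. In particular (L_n, B̃_n) is a compatible pair and the principal part of L_n B̃_n equals twice the identity matrix. -/
import Mathlib


/-- The type-`A_{n+1}`-style tridiagonal Cartan matrix entries on `{1,…,n}`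
(indices encoded as `Fin n` shifted by one): `2` on the diagonal, `-1` on the
off-diagonals, `0` elsewhere. -/
def cartanA (n : ℕ) (k₁ k₂ : Fin n) : ℤ :=
  if (k₁ : ℕ) = (k₂ : ℕ) then 2
  else if (k₁ : ℕ) + 1 = (k₂ : ℕ) ∨ (k₂ : ℕ) + 1 = (k₁ : ℕ) then -1 else 0

/-- The exchange matrix `B̃_n`: `b_{(k₁,ℓ₁),(k₂,ℓ₂)} = (ℓ₁ - ℓ₂)·a_{k₁k₂}`. -/
def Bmat (n : ℕ) (p q : Fin n × Fin 2) : ℤ :=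
  ((p.2 : ℕ) - (q.2 : ℕ) : ℤ) * cartanA n p.1 q.1

/-- The matrix `L_n`: `λ_{(k₁,ℓ₁),(k₂,ℓ₂)} = 2(ℓ₂ - ℓ₁)·min(k₁,k₂)` (with `k = val + 1`). -/
def Lmat (n : ℕ) (p q : Fin n × Fin 2) : ℤ :=
  2 * ((q.2 : ℕ) - (p.2 : ℕ) : ℤ) * (min ((p.1 : ℕ) + 1) ((q.1 : ℕ) + 1) : ℤ)

/-- The exchangeable indices: those `(k,ℓ)` with `k ∈ {1,…,n-1}` (i.e. `k = val + 1 < n`);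
the frozen ones are `(n,0)`, `(n,1)`. -/
def isExch (n : ℕ) (p : Fin n × Fin 2) : Prop := (p.1 : ℕ) + 1 < n

lemma cartan_min_aux (n a k : ℕ) (hk : k + 1 < n) :
    (∑ j ∈ Finset.range n, (min ((a : ℤ) + 1) ((j : ℤ) + 1)) *
        (if j = k then (2:ℤ) else if j + 1 = k ∨ k + 1 = j then -1 else 0))
      = if a = k then 1 else 0 := by
  rcases Nat.eq_zero_or_pos k with h0 | h0
  · subst h0
    have hsub : ({0, 1} : Finset ℕ) ⊆ Finset.range n := by
      intro x hx; simp at hx ⊢; omega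
    rw [← Finset.sum_subset hsub (fun x hx hxs => ?_)]
    · rw [Finset.sum_insert (by simp), Finset.sum_singleton]
      norm_num
      simp only [min_def]
      split_ifs <;> omega
    · simp only [Finset.mem_insert, Finset.mem_singleton, not_or] at hxs
      obtain ⟨hx0, hx1⟩ := hxs
      have : (if x = 0 then (2:ℤ) else if x + 1 = 0 ∨ 0 + 1 = x then -1 else 0) = 0 := by
        rw [if_neg (by omega), if_neg (by omega)]
      rw [this, mul_zero]
  · have hsub : ({k - 1, k, k + 1} : Finset ℕ) ⊆ Finset.range n := by
      intro x hx; simp at hx ⊢; omega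
    rw [← Finset.sum_subset hsub (fun x hx hxs => ?_)]
    · rw [Finset.sum_insert (by simp only [Finset.mem_insert, Finset.mem_singleton]; omega), Finset.sum_insert (by simp only [Finset.mem_singleton]; omega),
        Finset.sum_singleton]
      norm_num
      simp only [min_def]
      split_ifs <;> omega
    · simp only [Finset.mem_insert, Finset.mem_singleton, not_or] at hxs
      obtain ⟨hx0, hx1, hx2⟩ := hxs
      have : (if x = k then (2:ℤ) else if x + 1 = k ∨ k + 1 = x then -1 else 0) = 0 := by
        rw [if_neg (by omega), if_neg (by omega)]
      rw [this, mul_zero]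

lemma cartan_min_inner_sum (n : ℕ) (k₁ k₂ : Fin n) (hk : (k₂ : ℕ) + 1 < n) :
    (∑ j : Fin n, (min ((k₁ : ℕ) + 1) ((j : ℕ) + 1) : ℤ) * cartanA n j k₂)
      = if k₁ = k₂ then 1 else 0 := by
  have h1 : (∑ j : Fin n, (min ((k₁ : ℕ) + 1) ((j : ℕ) + 1) : ℤ) * cartanA n j k₂)
      = ∑ j ∈ Finset.range n, (min (((k₁ : ℕ) : ℤ) + 1) ((j : ℤ) + 1)) *
          (if j = (k₂ : ℕ) then (2:ℤ)
            else if j + 1 = (k₂ : ℕ) ∨ (k₂ : ℕ) + 1 = j then -1 else 0) := by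
    rw [← Fin.sum_univ_eq_sum_range]
    exact Finset.sum_congr rfl fun j _ => by simp [cartanA]
  rw [h1, cartan_min_aux n (k₁ : ℕ) (k₂ : ℕ) hk]
  simp [Fin.ext_iff]

/-- **Statement 17.** `L_n` is skew-symmetric, the principal part of `B̃_n` is
skew-symmetric, and `L_n B̃_n` is twice the identity on the principal part and zero
elsewhere; in particular `(L_n, B̃_n)` is a compatible pair. -/
theorem Lmat_Bmat_compatible (n : ℕ) (hn : 1 ≤ n) :
    (∀ p q : Fin n × Fin 2, Lmat n p q = - Lmat n q p) ∧
    (∀ p q : Fin n × Fin 2, isExch n p → isExch n q → Bmat n p q = - Bmat n q p) ∧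
    (∀ p q : Fin n × Fin 2, isExch n q →
      (∑ r : Fin n × Fin 2, Lmat n p r * Bmat n r q) = if p = q then 2 else 0) := by
  refine ⟨fun p q => ?_, fun p q _ _ => ?_, fun p q hq => ?_⟩
  · simp only [Lmat]
    rw [min_comm]
    ring
  · simp only [Bmat]
    have h : cartanA n p.1 q.1 = cartanA n q.1 p.1 := by
      simp only [cartanA]
      split_ifs <;> omega
    rw [h]; ring
  · have hc : (2 * ((0:ℤ) - ((p.2 : ℕ) : ℤ)) * ((0:ℤ) - ((q.2 : ℕ) : ℤ))
        + 2 * (1 - ((p.2 : ℕ) : ℤ)) * (1 - ((q.2 : ℕ) : ℤ)))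
        = if p.2 = q.2 then 2 else 0 := by
      have h1 : (p.2 : ℕ) = 0 ∨ (p.2 : ℕ) = 1 := by omega
      have h2 : (q.2 : ℕ) = 0 ∨ (q.2 : ℕ) = 1 := by omega
      simp only [Fin.ext_iff]
      rcases h1 with h1 | h1 <;> rcases h2 with h2 | h2 <;> rw [h1, h2] <;> norm_num
    have key : ∀ j : Fin n,
        Lmat n p (j, 0) * Bmat n (j, 0) q + Lmat n p (j, 1) * Bmat n (j, 1) q
        = (if p.2 = q.2 then (2:ℤ) else 0) *
            ((min ((p.1 : ℕ) + 1) ((j : ℕ) + 1) : ℤ) * cartanA n j q.1) := by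
      intro j
      rw [← hc]
      simp only [Lmat, Bmat, Fin.val_zero, Fin.val_one, Nat.cast_zero, Nat.cast_one]
      ring
    rw [Fintype.sum_prod_type]
    simp only [Fin.sum_univ_two]
    rw [Finset.sum_congr rfl (fun j _ => key j), ← Finset.mul_sum,
      cartan_min_inner_sum n p.1 q.1 hq]
    simp only [Prod.ext_iff]
    by_cases h1 : p.1 = q.1 <;> by_cases h2 : p.2 = q.2 <;>
      simp [h1, h2]
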